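/- (Richardson extrapolation step raises the TASE order.) Let p ≥ 2 be an integer, α a real number, e ∈ ℂ, and f : ℝ → ℂ → ℂ a function such that for each α' ∈ {α, α/2}, the map z ↦ f α' z - 1 - e * (α')^(p-1) * z^(p-1) is big-O of z^p as z → 0 in ℂ. Then the extrapolated function g(z) = (2^(p-1) * f (α/2) z - f α z) / (2^(p-1) - 1) satisfies: z ↦ g z - 1 is big-O of z^p as z → 0. -/

import Mathlib

open Asymptotics

/-- Richardson extrapolation step raises the TASE order: if `f α' z - 1` has leading
error term `e (α')^(p-1) z^(p-1)` up to `O(z^p)` for `α' ∈ {α, α/2}`, then the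
extrapolated function `(2^(p-1) f(α/2) - f(α))/(2^(p-1) - 1)` is `1 + O(z^p)`. -/
theorem richardson_step_raises_order (p : ℕ) (hp : 2 ≤ p) (α : ℝ) (e : ℂ)
    (f : ℝ → ℂ → ℂ)
    (hf : ∀ α' ∈ ({α, α / 2} : Set ℝ),
      (fun z : ℂ => f α' z - 1 - e * ((α' : ℂ)) ^ (p - 1) * z ^ (p - 1))
        =O[nhds 0] fun z : ℂ => z ^ p) :
    (fun z : ℂ => (2 ^ (p - 1) * f (α / 2) z - f α z) / (2 ^ (p - 1) - 1) - 1)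
      =O[nhds 0] fun z : ℂ => z ^ p := by
  have h1 := hf α (Set.mem_insert _ _)
  have h2 := hf (α / 2) (Set.mem_insert_of_mem _ rfl)
  have hcR : ((2 : ℝ) ^ (p - 1) - 1) ≠ 0 := by
    have : (2 : ℝ) ^ 1 ≤ (2 : ℝ) ^ (p - 1) :=
      pow_le_pow_right₀ one_le_two (by omega)
    nlinarith
  have hc : ((2 : ℂ) ^ (p - 1) - 1) ≠ 0 := by exact_mod_cast hcR
  have key := ((h2.const_mul_left ((2 : ℂ) ^ (p - 1))).sub h1).const_mul_left
    (((2 : ℂ) ^ (p - 1) - 1)⁻¹)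
  refine key.congr_left fun z => ?_
  have hpow : ((2 : ℂ) ^ (p - 1)) * (((α / 2 : ℝ) : ℂ)) ^ (p - 1) = ((α : ℂ)) ^ (p - 1) := by
    push_cast
    rw [div_pow, mul_div_cancel₀]
    exact pow_ne_zero _ two_ne_zero
  rw [← hpow]
  field_simp
  ring
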